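/- Let m ≥ 1, 1 ≤ k ≤ m, let U ⊆ ℂ be open, and let P, Q : U → M_m(ℂ) be continuously real-differentiable matrix-valued functions satisfying the zero-curvature equation ∂_z Q − ∂_{z̄} P + PQ − QP = 0 on U, where the Wirtinger derivatives are taken entrywise. Then the k-th additive compounds satisfy the zero-curvature equation as well: ∂_z (Q^{[k]}) − ∂_{z̄} (P^{[k]}) + P^{[k]} Q^{[k]} − Q^{[k]} P^{[k]} = 0 on U. -/

import Mathlib

/-- The Wirtinger derivative `f_z = ½(∂f/∂x − i ∂f/∂y)`. -/
noncomputable def wirtingerDz (f : ℂ → ℂ) (z : ℂ) : ℂ :=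
  (fderiv ℝ f z 1 - Complex.I * fderiv ℝ f z Complex.I) / 2

/-- The Wirtinger derivative `f_z̄ = ½(∂f/∂x + i ∂f/∂y)`. -/
noncomputable def wirtingerDzbar (f : ℂ → ℂ) (z : ℂ) : ℂ :=
  (fderiv ℝ f z 1 + Complex.I * fderiv ℝ f z Complex.I) / 2

/-- The `k`-th compound matrix: indexed by `k`-element subsets `S, T` of the row
and column index sets, with `(S,T)`-entry the determinant of the `k×k` submatrix
with rows `S` and columns `T`, each listed in increasing order. -/
noncomputable def compound {m : ℕ} (k : ℕ) (M : Matrix (Fin m) (Fin m) ℂ) :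
    Matrix {S : Finset (Fin m) // S.card = k} {S : Finset (Fin m) // S.card = k} ℂ :=
  Matrix.of fun S T =>
    (M.submatrix (fun a : Fin k => ((S.1.orderIsoOfFin S.2 a : Fin m)))
      (fun b : Fin k => ((T.1.orderIsoOfFin T.2 b : Fin m)))).det

/-- The `k`-th additive compound: the derivative at `t = 0` of
`t ↦ (I + tA)^{(k)}`, entrywise. -/
noncomputable def addCompound {m : ℕ} (k : ℕ) (A : Matrix (Fin m) (Fin m) ℂ) :
    Matrix {S : Finset (Fin m) // S.card = k} {S : Finset (Fin m) // S.card = k} ℂ :=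
  Matrix.of fun S T => deriv (fun t : ℂ => compound k (1 + t • A) S T) 0

set_option linter.unusedVariables false
set_option linter.unusedSectionVars false
set_option synthInstance.maxHeartbeats 400000
set_option maxHeartbeats 1000000

open Matrix Finset TrivSqZeroExt

namespace TT

variable {m k : ℕ}

abbrev Idx (m k : ℕ) := {S : Finset (Fin m) // S.card = k}
def emb (S : Idx m k) (a : Fin k) : Fin m := ((S.1.orderIsoOfFin S.2 a : Fin m))
theorem emb_injective (S : Idx m k) : Function.Injective (emb S) := fun a b hab =>
  (S.1.orderIsoOfFin S.2).injective (Subtype.ext hab)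
theorem emb_mem (S : Idx m k) (a : Fin k) : emb S a ∈ S.1 := (S.1.orderIsoOfFin S.2 a).2

section DetLemmas
variable {R : Type*} [CommRing R]

private theorem det_rows (M : Matrix (Fin k) (Fin k) R) :
    M.det = Matrix.detRowAlternating M := rfl

/-- Expansion of `det (B + C)` over subsets of rows. -/
theorem det_add_expand (B C : Matrix (Fin k) (Fin k) R) :
    (B + C).det = ∑ s : Finset (Fin k), Matrix.det (Matrix.of (s.piecewise C B)) := by
  have h := (Matrix.detRowAlternating :
      (Fin k → R) [⋀^Fin k]→ₗ[R] R).toMultilinearMap.map_add_univ C B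
  rw [det_rows, add_comm B C]
  exact h

/-- Pull a scalar out of a piecewise family. -/
theorem det_piecewise_smul (B C : Matrix (Fin k) (Fin k) R) (c : R) (s : Finset (Fin k)) :
    Matrix.det (Matrix.of (s.piecewise (c • C) B))
      = c ^ s.card • Matrix.det (Matrix.of (s.piecewise C B)) := by
  have h := (Matrix.detRowAlternating :
      (Fin k → R) [⋀^Fin k]→ₗ[R] R).toMultilinearMap.map_piecewise_smul
      (fun _ => c) (s.piecewise C B) s
  rw [Finset.prod_const] at h
  have e : s.piecewise (fun i => c • s.piecewise C B i) (s.piecewise C B)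
      = Matrix.of (s.piecewise (c • C) B) := by
    ext i j
    by_cases hi : i ∈ s <;> simp [Finset.piecewise, hi]
  rw [e] at h
  rw [det_rows, det_rows]
  exact h

theorem det_add_smul_expand (B C : Matrix (Fin k) (Fin k) R) (c : R) :
    (B + c • C).det
      = ∑ s : Finset (Fin k), c ^ s.card • Matrix.det (Matrix.of (s.piecewise C B)) := by
  rw [det_add_expand B (c • C)]
  exact Finset.sum_congr rfl fun s _ => det_piecewise_smul B C c s

theorem sum_card_one {M : Type*} [AddCommMonoid M] (g : Finset (Fin k) → M) :
    (∑ s : Finset (Fin k), if s.card = 1 then g s else 0) = ∑ i : Fin k, g {i} := by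
  classical
  rw [Finset.sum_ite, Finset.sum_const_zero, add_zero]
  have h1 : (Finset.univ.filter fun s : Finset (Fin k) => s.card = 1)
      = Finset.univ.powersetCard 1 := by
    rw [Finset.powersetCard_eq_filter, Finset.powerset_univ]
  rw [h1, Finset.powersetCard_one, Finset.sum_map]
  rfl

theorem piecewise_single (B C : Matrix (Fin k) (Fin k) R) (i : Fin k) :
    Matrix.of (({i} : Finset (Fin k)).piecewise C B) = B.updateRow i (C i) := by
  ext a b
  by_cases ha : a = i
  · subst ha; simp [Finset.piecewise]
  · simp [Finset.piecewise, ha, Matrix.updateRow_ne ha]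


/-- First-order expansion of the determinant along a square-zero scalar. -/
theorem det_add_nil_smul (B C : Matrix (Fin k) (Fin k) R) (c : R) (hc : c * c = 0) :
    (B + c • C).det = B.det + c • ∑ i : Fin k, (B.updateRow i (C i)).det := by
  rw [det_add_smul_expand]
  have key : ∀ s : Finset (Fin k),
      c ^ s.card • Matrix.det (Matrix.of (s.piecewise C B))
        = (if s = ∅ then Matrix.det (Matrix.of (s.piecewise C B)) else 0)
          + (if s.card = 1 then c • Matrix.det (Matrix.of (s.piecewise C B)) else 0) := by
    intro s
    by_cases h0 : s = ∅
    · simp [h0]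
    · by_cases h1 : s.card = 1
      · simp [h0, h1, pow_one]
      · have h2 : 2 ≤ s.card := by
          have hpos : 0 < s.card := Finset.card_pos.mpr (Finset.nonempty_iff_ne_empty.mpr h0)
          omega
        have hz : c ^ s.card = 0 := by
          obtain ⟨n, hn⟩ : ∃ n, s.card = n + 2 := ⟨s.card - 2, by omega⟩
          rw [hn, pow_add, pow_two, hc, mul_zero]
        simp [h0, h1, hz]
  rw [Finset.sum_congr rfl fun s _ => key s, Finset.sum_add_distrib]
  congr 1
  · rw [Finset.sum_ite_eq' Finset.univ ∅]
    simp only [Finset.mem_univ, if_true, Finset.piecewise_empty]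
    rfl
  · rw [sum_card_one fun s => c • Matrix.det (Matrix.of (s.piecewise C B)), ← Finset.smul_sum]
    congr 1
    exact Finset.sum_congr rfl fun i _ => by rw [piecewise_single]

/-- Entries annihilated by `c` do not affect `c • det`. -/
theorem smul_det_add_absorb (B N : Matrix (Fin k) (Fin k) R) (c : R)
    (hN : ∀ i j, c * N i j = 0) : c • (B + N).det = c • B.det := by
  rw [det_add_expand, Finset.smul_sum, Finset.sum_eq_single ∅]
  · have he : (∅ : Finset (Fin k)).piecewise N B = B := Finset.piecewise_empty _ _
    rw [he]
    rfl
  · intro s _ hs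
    obtain ⟨j, hj⟩ := Finset.nonempty_iff_ne_empty.mpr hs
    have hdet : ∀ x : Fin k → Fin k → R, Matrix.det (Matrix.of x)
        = (Matrix.detRowAlternating :
            (Fin k → R) [⋀^Fin k]→ₗ[R] R).toMultilinearMap x := fun _ => rfl
    set f := (Matrix.detRowAlternating :
        (Fin k → R) [⋀^Fin k]→ₗ[R] R).toMultilinearMap with hf
    rw [hdet]
    set m0 : Fin k → Fin k → R := s.piecewise N B with hm0
    have hmj : m0 j = N j := Finset.piecewise_eq_of_mem _ _ _ hj
    have hzero : c • N j = (0 : Fin k → R) := by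
      funext l
      simp [hN j l]
    have h1 : f (Function.update m0 j (c • N j)) = c • f (Function.update m0 j (N j)) :=
      f.map_update_smul m0 j c (N j)
    rw [hzero] at h1
    rw [f.map_update_zero] at h1
    rw [← hmj, Function.update_eq_self] at h1
    exact h1.symm
  · intro h; exact absurd (Finset.mem_univ _) h


end DetLemmas

section DetC
variable {R : Type*} [CommRing R]
theorem deriv_det_add_smul (B C : Matrix (Fin k) (Fin k) ℂ) :
    deriv (fun t : ℂ => (B + t • C).det) 0 = ∑ i : Fin k, (B.updateRow i (C i)).det := by
  have hfun : (fun t : ℂ => (B + t • C).det)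
      = fun t => ∑ s : Finset (Fin k),
          t ^ s.card * Matrix.det (Matrix.of (s.piecewise C B)) := by
    funext t
    rw [det_add_smul_expand]
    simp [smul_eq_mul]
  have hder : HasDerivAt
      (fun t : ℂ => ∑ s : Finset (Fin k), t ^ s.card * Matrix.det (Matrix.of (s.piecewise C B)))
      (∑ s : Finset (Fin k),
        if s.card = 1 then Matrix.det (Matrix.of (s.piecewise C B)) else 0) 0 := by
    apply HasDerivAt.fun_sum
    intro s _
    have h := (hasDerivAt_pow s.card (0 : ℂ)).mul_const (Matrix.det (Matrix.of (s.piecewise C B)))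
    have hval : ((s.card : ℂ) * 0 ^ (s.card - 1)) * Matrix.det (Matrix.of (s.piecewise C B))
        = if s.card = 1 then Matrix.det (Matrix.of (s.piecewise C B)) else 0 := by
      rcases hn : s.card with _ | n
      · simp
      · rcases n with _ | n
        · simp
        · simp [pow_succ]
    rw [hval] at h
    exact h
  rw [hfun, hder.deriv, sum_card_one]
  exact Finset.sum_congr rfl fun i _ => by rw [piecewise_single]


/-- Recombine an injective function as an ordered embedding composed with a permutation. -/
noncomputable def pairOf (r : Fin k → Fin m) (hr : Function.Injective r) :
    Idx m k × Equiv.Perm (Fin k) :=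
  let X : Idx m k := ⟨Finset.image r Finset.univ, by
    rw [Finset.card_image_of_injective _ hr, Finset.card_univ, Fintype.card_fin]⟩
  let q : Fin k → Fin k := fun a => (X.1.orderIsoOfFin X.2).symm
    ⟨r a, Finset.mem_image_of_mem r (Finset.mem_univ a)⟩
  have hq : Function.Injective q := by
    intro a b hab
    have := congrArg (X.1.orderIsoOfFin X.2) hab
    rw [OrderIso.apply_symm_apply, OrderIso.apply_symm_apply] at this
    exact hr (congrArg Subtype.val this)
  (X, Equiv.ofBijective q (Finite.injective_iff_bijective.mp hq))

theorem pairOf_recover (r : Fin k → Fin m) (hr : Function.Injective r) (a : Fin k) :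
    emb (pairOf r hr).1 ((pairOf r hr).2 a) = r a := by
  show ((((pairOf r hr).1).1.orderIsoOfFin _ _ : _) : Fin m) = r a
  simp only [pairOf, Equiv.ofBijective_apply, OrderIso.apply_symm_apply]
  exact congrArg Subtype.val (OrderIso.apply_symm_apply _ _)

theorem sum_funs {M : Type*} [AddCommMonoid M] (F : (Fin k → Fin m) → M)
    (h0 : ∀ r, ¬ Function.Injective r → F r = 0) :
    ∑ r : Fin k → Fin m, F r
      = ∑ p : Idx m k × Equiv.Perm (Fin k), F (fun a => emb p.1 (p.2 a)) := by
  classical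
  apply Finset.sum_bij_ne_zero
    (i := fun r _ h2 => pairOf r (by by_contra hni; exact h2 (h0 r hni)))
  · intro a h₁ h₂; exact Finset.mem_univ _
  · intro r₁ h₁₁ h₁₂ r₂ h₂₁ h₂₂ heq
    funext a
    have e1 := pairOf_recover r₁ (by by_contra hni; exact h₁₂ (h0 r₁ hni)) a
    have e2 := pairOf_recover r₂ (by by_contra hni; exact h₂₂ (h0 r₂ hni)) a
    rw [← e1, ← e2, heq]
  · rintro ⟨⟨Xs, hXk⟩, π⟩ - hg
    refine ⟨fun a => emb ⟨Xs, hXk⟩ (π a), Finset.mem_univ _, hg, ?_⟩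
    have hr : Function.Injective fun a => emb ⟨Xs, hXk⟩ (π a) :=
      fun a b hab => π.injective (emb_injective _ hab)
    have himg : Finset.image (fun a => emb ⟨Xs, hXk⟩ (π a)) Finset.univ = Xs := by
      ext x
      simp only [Finset.mem_image, Finset.mem_univ, true_and]
      constructor
      · rintro ⟨a, rfl⟩; exact emb_mem _ _
      · intro hx
        exact ⟨π.symm ((Xs.orderIsoOfFin hXk).symm ⟨x, hx⟩), by
          simp only [Equiv.apply_symm_apply, emb]
          rw [OrderIso.apply_symm_apply]⟩
    have hX : (pairOf _ hr).1 = (⟨Xs, hXk⟩ : Idx m k) := Subtype.ext himg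
    refine Prod.ext hX ?_
    apply Equiv.ext
    intro a
    have h1 := pairOf_recover _ hr a
    rw [hX] at h1
    exact emb_injective (⟨Xs, hXk⟩ : Idx m k) h1
  · intro r h₁ h₂
    exact congrArg F (funext fun a =>
      (pairOf_recover r (by by_contra hni; exact h₂ (h0 r hni)) a).symm)


theorem cauchy_binet (A : Matrix (Fin k) (Fin m) R) (B : Matrix (Fin m) (Fin k) R) :
    (A * B).det
      = ∑ X : Idx m k, (A.submatrix id (emb X)).det * (B.submatrix (emb X) id).det := by
  classical
  set f := (Matrix.detRowAlternating : (Fin k → R) [⋀^Fin k]→ₗ[R] R).toMultilinearMap with hf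
  have h1 : (A * B).det = f (fun i => ∑ x : Fin m, A i x • B x) := by
    have h : (fun i => ∑ x : Fin m, A i x • B x) = fun i j => (A * B) i j := by
      funext i j
      simp [Matrix.mul_apply, Finset.sum_apply]
    rw [h]; rfl
  rw [h1, f.map_sum]
  have h2 : ∀ r : Fin k → Fin m, (f fun i => A i (r i) • B (r i))
      = (∏ i, A i (r i)) * (B.submatrix r id).det := by
    intro r
    rw [f.map_smul_univ, smul_eq_mul]; rfl
  rw [Finset.sum_congr rfl fun r _ => h2 r]
  have hvanish : ∀ r : Fin k → Fin m, ¬ Function.Injective r →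
      (∏ i, A i (r i)) * (B.submatrix r id).det = 0 := by
    intro r hr
    simp only [Function.Injective, not_forall] at hr
    obtain ⟨i, j, hij, hne⟩ := hr
    rw [Matrix.det_zero_of_row_eq hne (by
      show (fun l => B (r i) l) = fun l => B (r j) l
      rw [hij]), mul_zero]
  rw [sum_funs _ hvanish, Fintype.sum_prod_type]
  refine Finset.sum_congr rfl fun X _ => ?_
  have hperm : ∀ π : Equiv.Perm (Fin k),
      (B.submatrix (fun a => emb X (π a)) id).det
        = (Equiv.Perm.sign π : ℤ) * (B.submatrix (emb X) id).det := by
    intro π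
    have h3 : B.submatrix (fun a => emb X (π a)) id
        = (B.submatrix (emb X) id).submatrix π id := by
      rw [Matrix.submatrix_submatrix]; rfl
    rw [h3, Matrix.det_permute]
  have hdA : (A.submatrix id (emb X)).det
      = ∑ π : Equiv.Perm (Fin k), ((Equiv.Perm.sign π : ℤ) : R) * ∏ i, A i (emb X (π i)) := by
    rw [← Matrix.det_transpose, Matrix.det_apply']
    rfl
  calc ∑ π : Equiv.Perm (Fin k), (∏ i, A i (emb X (π i)))
        * (B.submatrix (fun a => emb X (π a)) id).det
      = ∑ π : Equiv.Perm (Fin k), (((Equiv.Perm.sign π : ℤ) : R) * ∏ i, A i (emb X (π i)))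
        * (B.submatrix (emb X) id).det := by
        refine Finset.sum_congr rfl fun π _ => ?_
        rw [hperm π]
        ring
    _ = (A.submatrix id (emb X)).det * (B.submatrix (emb X) id).det := by
        rw [hdA, Finset.sum_mul]


def sub (S T : Idx m k) (M : Matrix (Fin m) (Fin m) R) : Matrix (Fin k) (Fin k) R :=
  M.submatrix (emb S) (emb T)

def gcomp (M : Matrix (Fin m) (Fin m) R) : Matrix (Idx m k) (Idx m k) R :=
  Matrix.of fun S T => (sub S T M).det

def gadc (A : Matrix (Fin m) (Fin m) R) : Matrix (Idx m k) (Idx m k) R :=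
  Matrix.of fun S T => ∑ i : Fin k,
    ((sub S T (1 : Matrix (Fin m) (Fin m) R)).updateRow i (sub S T A i)).det

theorem sub_add (S T : Idx m k) (M N : Matrix (Fin m) (Fin m) R) :
    sub S T (M + N) = sub S T M + sub S T N := rfl

theorem sub_smul (S T : Idx m k) (c : R) (M : Matrix (Fin m) (Fin m) R) :
    sub S T (c • M) = c • sub S T M := rfl

theorem gadc_add (A B : Matrix (Fin m) (Fin m) R) : gadc (A + B) = (gadc A + gadc B : Matrix (Idx m k) (Idx m k) R) := by
  ext S T
  simp only [gadc, Matrix.of_apply, Matrix.add_apply]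
  rw [← Finset.sum_add_distrib]
  refine Finset.sum_congr rfl fun i _ => ?_
  have : sub S T (A + B) i = sub S T A i + sub S T B i := rfl
  rw [this, Matrix.det_updateRow_add]

theorem gadc_smul (c : R) (A : Matrix (Fin m) (Fin m) R) : gadc (c • A) = (c • gadc A : Matrix (Idx m k) (Idx m k) R) := by
  ext S T
  simp only [gadc, Matrix.of_apply, Matrix.smul_apply]
  rw [Finset.smul_sum]
  refine Finset.sum_congr rfl fun i _ => ?_
  have : sub S T (c • A) i = c • sub S T A i := rfl
  rw [this, Matrix.det_updateRow_smul, smul_eq_mul]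

theorem gadc_map {S' : Type*} [CommRing S'] (f : R →+* S') (A : Matrix (Fin m) (Fin m) R) :
    gadc (A.map f) = ((gadc A : Matrix (Idx m k) (Idx m k) R).map f) := by
  ext S T
  show (∑ i : Fin k, _) = f (∑ i : Fin k, _)
  rw [map_sum]
  refine Finset.sum_congr rfl fun i _ => ?_
  rw [RingHom.map_det]
  congr 1
  ext a b
  by_cases ha : a = i
  · subst ha
    simp [Matrix.updateRow_self, sub, Matrix.map_apply]
  · simp [Matrix.map_apply, Matrix.updateRow_ne ha, sub, Matrix.one_apply, apply_ite f]

theorem gcomp_one : gcomp (1 : Matrix (Fin m) (Fin m) R) = (1 : Matrix (Idx m k) (Idx m k) R) := by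
  ext S T
  by_cases hST : S = T
  · subst hST
    have : sub S S (1 : Matrix (Fin m) (Fin m) R) = 1 := by
      ext i j
      simp [sub, Matrix.one_apply, (emb_injective S).eq_iff]
    show (sub S S (1 : Matrix (Fin m) (Fin m) R)).det = _
    rw [this, Matrix.det_one, Matrix.one_apply_eq]
  · obtain ⟨x, hxS, hxT⟩ : ∃ x ∈ S.1, x ∉ T.1 := by
      by_contra h
      push_neg at h
      exact hST (Subtype.ext (Finset.eq_of_subset_of_card_le h (by rw [S.2, T.2])))
    show (sub S T (1 : Matrix (Fin m) (Fin m) R)).det = _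
    rw [Matrix.one_apply_ne hST]
    set i : Fin k := (S.1.orderIsoOfFin S.2).symm ⟨x, hxS⟩
    refine Matrix.det_eq_zero_of_row_eq_zero i fun j => ?_
    have hembi : emb S i = x := by
      show ((S.1.orderIsoOfFin S.2) ((S.1.orderIsoOfFin S.2).symm ⟨x, hxS⟩) : Fin m) = x
      rw [OrderIso.apply_symm_apply]
    show (1 : Matrix (Fin m) (Fin m) R) (emb S i) (emb T j) = 0
    rw [hembi]
    exact Matrix.one_apply_ne fun h => hxT (h ▸ emb_mem T j)

theorem gcomp_mul (M N : Matrix (Fin m) (Fin m) R) :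
    gcomp (M * N) = (gcomp M : Matrix (Idx m k) (Idx m k) R) * gcomp N := by
  ext S T
  rw [Matrix.mul_apply]
  show (sub S T (M * N)).det = _
  have h : sub S T (M * N) = (M.submatrix (emb S) id) * (N.submatrix id (emb T)) := by
    ext i j
    simp [sub, Matrix.mul_apply]
  rw [h, cauchy_binet]
  refine Finset.sum_congr rfl fun X _ => ?_
  rw [Matrix.submatrix_submatrix, Matrix.submatrix_submatrix]
  simp only [Function.comp_id, Function.id_comp]
  rfl

theorem gcomp_nil (A : Matrix (Fin m) (Fin m) R) (c : R) (hc : c * c = 0) :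
    gcomp (1 + c • A) = ((1 : Matrix (Idx m k) (Idx m k) R) + c • gadc A : Matrix (Idx m k) (Idx m k) R) := by
  rw [← gcomp_one (R := R) (m := m) (k := k)]
  ext S T
  show (sub S T (1 + c • A)).det = _
  rw [sub_add, sub_smul, det_add_nil_smul _ _ _ hc]
  rfl

theorem gcomp_nil₂ (M D : Matrix (Fin m) (Fin m) R) (c : R) (hc : c * c = 0)
    (hM : ∀ i j, c * M i j = 0) :
    gcomp (1 + M + c • D)
      = (gcomp (1 + M) + c • gadc D : Matrix (Idx m k) (Idx m k) R) := by
  ext S T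
  show (sub S T (1 + M + c • D)).det = (sub S T (1 + M)).det + c • _
  rw [sub_add, sub_smul, det_add_nil_smul _ _ _ hc]
  congr 1
  show c • _ = c • (∑ i : Fin k, _)
  rw [Finset.smul_sum, Finset.smul_sum]
  refine Finset.sum_congr rfl fun i _ => ?_
  have hsplit : (sub S T (1 + M)).updateRow i (sub S T D i)
      = (sub S T (1 : Matrix (Fin m) (Fin m) R)).updateRow i (sub S T D i)
        + (sub S T M).updateRow i 0 := by
    ext a b
    by_cases ha : a = i
    · subst ha; simp [Matrix.updateRow_self]
    · simp [Matrix.updateRow_ne ha, sub, Matrix.add_apply]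
  rw [hsplit, smul_det_add_absorb]
  intro a b
  by_cases ha : a = i
  · subst ha; simp [Matrix.updateRow_self]
  · simp only [Matrix.updateRow_ne ha]
    exact hM _ _


noncomputable section Bidual
abbrev R2 := DualNumber (DualNumber ℂ)
instance instR2CommRing : CommRing R2 := inferInstance
instance instR2Ring : Ring R2 := inferInstance
instance instR2CommSemiring : CommSemiring R2 := inferInstance
instance instR2Semiring : Semiring R2 := inferInstance
instance instR2NonAssocSemiring : NonAssocSemiring R2 := inferInstance
instance instR2NonUnitalNonAssocSemiring : NonUnitalNonAssocSemiring R2 := inferInstance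
instance instR2AddCommGroup : AddCommGroup R2 := inferInstance
instance instR2AddCommMonoid : AddCommMonoid R2 := inferInstance
instance instR2CommMonoid : CommMonoid R2 := inferInstance
instance instR2Monoid : Monoid R2 := inferInstance
instance instR2MulOneClass : MulOneClass R2 := inferInstance
instance instR2MulZeroClass : MulZeroClass R2 := inferInstance
instance instR2One : One R2 := inferInstance
instance instR2Zero : Zero R2 := inferInstance
instance instR2Mul : Mul R2 := inferInstance
instance instR2Add : Add R2 := inferInstance
def dEps : R2 := DualNumber.eps
def dDel : R2 := TrivSqZeroExt.inl (DualNumber.eps : DualNumber ℂ)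
def iota : ℂ →+* R2 :=
  (TrivSqZeroExt.inlHom (DualNumber ℂ) (DualNumber ℂ)).comp (TrivSqZeroExt.inlHom ℂ ℂ)
theorem hee : dEps * dEps = 0 := DualNumber.eps_mul_eps
theorem hdd : dDel * dDel = 0 := by
  rw [dDel, inl_mul_inl, DualNumber.eps_mul_eps, inl_zero]
theorem hce : (dEps * dDel) * dEps = 0 := by
  rw [mul_right_comm, hee, zero_mul]
theorem hcd : (dEps * dDel) * dDel = 0 := by
  rw [mul_assoc, hdd, mul_zero]
theorem hcc : (dEps * dDel) * (dEps * dDel) = 0 := by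
  rw [mul_mul_mul_comm, hee, zero_mul]
theorem extract (a : ℂ) : ((dEps * dDel) * iota a).snd.snd = a := by
  simp only [dEps, dDel, iota, RingHom.comp_apply, TrivSqZeroExt.inlHom_apply]
  rw [TrivSqZeroExt.snd_mul, TrivSqZeroExt.snd_mul]
  simp only [TrivSqZeroExt.fst_mul, TrivSqZeroExt.fst_inl, TrivSqZeroExt.snd_inl,
    TrivSqZeroExt.fst_inr, TrivSqZeroExt.snd_inr, DualNumber.eps,
    smul_eq_mul, op_smul_eq_mul, smul_zero, zero_smul, mul_zero, zero_mul,
    add_zero, zero_add, mul_one, one_mul]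
  rw [TrivSqZeroExt.inr_mul_inl, TrivSqZeroExt.snd_inr, op_smul_eq_mul, one_mul]

theorem hprod {α : Type*} [CommRing α] {n : Type*} [Fintype n] [DecidableEq n]
    (X Y : Matrix n n α) (e d : α) :
    (1 + e • X) * (1 + d • Y) = 1 + (e • X + d • Y) + (e * d) • (X * Y) := by
  have h : (e • X) * (d • Y) = (e * d) • (X * Y) := by
    rw [smul_mul_assoc, mul_smul_comm, smul_smul]
  rw [add_mul, one_mul, mul_add, mul_one, h]
  abel

theorem gexp {α : Type*} [CommRing α] (X Y : Matrix (Fin m) (Fin m) α) (e d : α)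
    (he : e * e = 0) (hd : d * d = 0) (hede : e * d * e = 0) (hedd : e * d * d = 0) :
    (gcomp (1 + (e • X + d • Y)) + (e * d) • gadc (X * Y) : Matrix (Idx m k) (Idx m k) α)
      = 1 + (e • gadc X + d • gadc Y) + (e * d) • (gadc X * gadc Y) := by
  have hcc : (e * d) * (e * d) = 0 := by rw [mul_mul_mul_comm, he, zero_mul]
  have hM : ∀ i j, (e * d) * (e • X + d • Y) i j = 0 := by
    intro i j
    simp only [Matrix.add_apply, Matrix.smul_apply, smul_eq_mul]
    rw [mul_add, ← mul_assoc, ← mul_assoc, hede, hedd, zero_mul, zero_mul, add_zero]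
  rw [← gcomp_nil₂ _ _ _ hcc hM, ← hprod, gcomp_mul, gcomp_nil X e he, gcomp_nil Y d hd, hprod]

theorem gadc_bracket_smul {α : Type*} [CommRing α] (X Y : Matrix (Fin m) (Fin m) α) (e d : α)
    (he : e * e = 0) (hd : d * d = 0) (hede : e * d * e = 0) (hedd : e * d * d = 0) :
    ((e * d) • (gadc (X * Y) - gadc (Y * X)) : Matrix (Idx m k) (Idx m k) α)
      = (e * d) • (gadc X * gadc Y - gadc Y * gadc X) := by
  have eq1 := gexp (k := k) X Y e d he hd hede hedd
  have eq2 := gexp (k := k) Y X d e hd he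
    (by rw [mul_comm d e, mul_right_comm]; exact hedd)
    (by rw [mul_comm d e, mul_assoc]; rw [mul_assoc] at hede; exact hede)
  rw [mul_comm d e, add_comm (d • Y) (e • X), add_comm (d • gadc Y) (e • gadc X)] at eq2
  rw [smul_sub, smul_sub]
  calc ((e * d) • gadc (X * Y) - (e * d) • gadc (Y * X) : Matrix (Idx m k) (Idx m k) α)
      = (gcomp (1 + (e • X + d • Y)) + (e * d) • gadc (X * Y))
        - (gcomp (1 + (e • X + d • Y)) + (e * d) • gadc (Y * X)) := by abel
    _ = (1 + (e • gadc X + d • gadc Y) + (e * d) • (gadc X * gadc Y))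
        - (1 + (e • gadc X + d • gadc Y) + (e * d) • (gadc Y * gadc X)) := by rw [eq1, eq2]
    _ = (e * d) • (gadc X * gadc Y) - (e * d) • (gadc Y * gadc X) := by abel

theorem gadc_bracket (A B : Matrix (Fin m) (Fin m) ℂ) :
    (gadc (A * B) - gadc (B * A) : Matrix (Idx m k) (Idx m k) ℂ)
      = gadc A * gadc B - gadc B * gadc A := by
  classical
  have final := gadc_bracket_smul (k := k) (A.map iota) (B.map iota) dEps dDel hee hdd hce hcd
  ext S T
  have hentry := congrFun (congrFun final S) T
  simp only [Matrix.smul_apply, Matrix.sub_apply, smul_eq_mul] at hentry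
  have hAB : (A.map iota) * (B.map iota) = (A * B).map iota := (Matrix.map_mul).symm
  have hBA : (B.map iota) * (A.map iota) = (B * A).map iota := (Matrix.map_mul).symm
  have hX : (gadc (A.map iota) * gadc (B.map iota) : Matrix (Idx m k) (Idx m k) R2)
      = (gadc A * gadc B : Matrix (Idx m k) (Idx m k) ℂ).map iota := by
    rw [gadc_map, gadc_map, Matrix.map_mul]
  have hY : (gadc (B.map iota) * gadc (A.map iota) : Matrix (Idx m k) (Idx m k) R2)
      = (gadc B * gadc A : Matrix (Idx m k) (Idx m k) ℂ).map iota := by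
    rw [gadc_map, gadc_map, Matrix.map_mul]
  rw [hAB, hBA, gadc_map, gadc_map, hX, hY] at hentry
  simp only [Matrix.map_apply] at hentry
  rw [← map_sub, ← map_sub] at hentry
  have hval := congrArg (fun x : R2 => x.snd.snd) hentry
  rw [extract, extract] at hval
  simpa [Matrix.sub_apply] using hval

end Bidual

theorem gadc_sub (X Y : Matrix (Fin m) (Fin m) ℂ) :
    gadc (X - Y) = (gadc X - gadc Y : Matrix (Idx m k) (Idx m k) ℂ) := by
  have h := gadc_add (k := k) (X - Y) Y
  rw [sub_add_cancel] at h
  rw [h]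
  abel

/-- `gadc` as an additive homomorphism. -/
noncomputable def gadcHom :
    Matrix (Fin m) (Fin m) ℂ →+ Matrix (Idx m k) (Idx m k) ℂ :=
  AddMonoidHom.mk' gadc gadc_add

theorem gadc_decomp (N : Matrix (Fin m) (Fin m) ℂ) (S T : Idx m k) :
    gadc N S T = ∑ i : Fin m, ∑ j : Fin m,
      N i j * gadc (Matrix.single i j 1) S T := by
  conv_lhs => rw [show N = ∑ i : Fin m, ∑ j : Fin m, Matrix.single i j (N i j) from
    Matrix.matrix_eq_sum_single N]
  have hsum : gadc (∑ i : Fin m, ∑ j : Fin m, Matrix.single i j (N i j))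
      = (∑ i : Fin m, ∑ j : Fin m, gadc (Matrix.single i j (N i j))
        : Matrix (Idx m k) (Idx m k) ℂ) := by
    show (gadcHom (m := m) (k := k)) _ = _
    rw [map_sum]
    exact Finset.sum_congr rfl fun i _ => map_sum _ _ _
  rw [hsum]
  rw [Matrix.sum_apply, Finset.sum_congr rfl fun i _ => Matrix.sum_apply _ _ _ _]
  refine Finset.sum_congr rfl fun i _ => Finset.sum_congr rfl fun j _ => ?_
  have h1 : Matrix.single i j (N i j) = N i j • Matrix.single i j 1 := by
    rw [Matrix.smul_single, smul_eq_mul, mul_one]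
  rw [h1, gadc_smul]
  simp [Matrix.smul_apply]

theorem wDz_sum {ι : Type*} (s : Finset ι) (f : ι → ℂ → ℂ) (z : ℂ)
    (hf : ∀ i ∈ s, DifferentiableAt ℝ (f i) z) :
    wirtingerDz (fun w => ∑ i ∈ s, f i w) z = ∑ i ∈ s, wirtingerDz (f i) z := by
  unfold wirtingerDz
  rw [fderiv_fun_sum hf]
  simp only [ContinuousLinearMap.coe_sum', Finset.sum_apply]
  rw [Finset.mul_sum, ← Finset.sum_sub_distrib, ← Finset.sum_div]

theorem wDzbar_sum {ι : Type*} (s : Finset ι) (f : ι → ℂ → ℂ) (z : ℂ)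
    (hf : ∀ i ∈ s, DifferentiableAt ℝ (f i) z) :
    wirtingerDzbar (fun w => ∑ i ∈ s, f i w) z = ∑ i ∈ s, wirtingerDzbar (f i) z := by
  unfold wirtingerDzbar
  rw [fderiv_fun_sum hf]
  simp only [ContinuousLinearMap.coe_sum', Finset.sum_apply]
  rw [Finset.mul_sum, ← Finset.sum_add_distrib, ← Finset.sum_div]

theorem wDz_mul_const (f : ℂ → ℂ) (c : ℂ) (z : ℂ) (hf : DifferentiableAt ℝ f z) :
    wirtingerDz (fun w => f w * c) z = wirtingerDz f z * c := by
  unfold wirtingerDz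
  rw [fderiv_mul_const hf]
  simp only [ContinuousLinearMap.smul_apply, smul_eq_mul]
  ring

theorem wDzbar_mul_const (f : ℂ → ℂ) (c : ℂ) (z : ℂ) (hf : DifferentiableAt ℝ f z) :
    wirtingerDzbar (fun w => f w * c) z = wirtingerDzbar f z * c := by
  unfold wirtingerDzbar
  rw [fderiv_mul_const hf]
  simp only [ContinuousLinearMap.smul_apply, smul_eq_mul]
  ring

theorem wDz_gadc (Q : ℂ → Matrix (Fin m) (Fin m) ℂ) (z : ℂ)
    (hQ : ∀ i j, DifferentiableAt ℝ (fun w => Q w i j) z) (S T : Idx m k) :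
    wirtingerDz (fun w => gadc (Q w) S T) z
      = gadc (Matrix.of fun i j => wirtingerDz (fun w => Q w i j) z) S T := by
  have hfun : (fun w => gadc (Q w) S T)
      = fun w => ∑ i : Fin m, ∑ j : Fin m,
          Q w i j * gadc (Matrix.single i j 1) S T :=
    funext fun w => gadc_decomp (Q w) S T
  rw [hfun, wDz_sum _ _ _ fun i _ => DifferentiableAt.fun_sum
    fun j _ => (hQ i j).mul_const _]
  rw [Finset.sum_congr rfl fun i _ => wDz_sum _ _ _ fun j _ => (hQ i j).mul_const _]
  rw [gadc_decomp]
  refine Finset.sum_congr rfl fun i _ => Finset.sum_congr rfl fun j _ => ?_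
  rw [wDz_mul_const _ _ _ (hQ i j)]
  rfl

theorem wDzbar_gadc (Q : ℂ → Matrix (Fin m) (Fin m) ℂ) (z : ℂ)
    (hQ : ∀ i j, DifferentiableAt ℝ (fun w => Q w i j) z) (S T : Idx m k) :
    wirtingerDzbar (fun w => gadc (Q w) S T) z
      = gadc (Matrix.of fun i j => wirtingerDzbar (fun w => Q w i j) z) S T := by
  have hfun : (fun w => gadc (Q w) S T)
      = fun w => ∑ i : Fin m, ∑ j : Fin m,
          Q w i j * gadc (Matrix.single i j 1) S T :=
    funext fun w => gadc_decomp (Q w) S T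
  rw [hfun, wDzbar_sum _ _ _ fun i _ => DifferentiableAt.fun_sum
    fun j _ => (hQ i j).mul_const _]
  rw [Finset.sum_congr rfl fun i _ => wDzbar_sum _ _ _ fun j _ => (hQ i j).mul_const _]
  rw [gadc_decomp]
  refine Finset.sum_congr rfl fun i _ => Finset.sum_congr rfl fun j _ => ?_
  rw [wDzbar_mul_const _ _ _ (hQ i j)]
  rfl


theorem addCompound_eq (A : Matrix (Fin m) (Fin m) ℂ) :
    addCompound k A = (gadc A : Matrix (Idx m k) (Idx m k) ℂ) := by
  ext S T
  show deriv (fun t : ℂ => compound k (1 + t • A) S T) 0 = _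
  have h : (fun t : ℂ => compound k (1 + t • A) S T)
      = fun t : ℂ => ((sub S T (1 : Matrix (Fin m) (Fin m) ℂ)) + t • sub S T A).det := by
    funext t
    show (sub S T (1 + t • A)).det = _
    rw [sub_add, sub_smul]
  rw [h, deriv_det_add_smul]
  rfl


end DetC
end TT

open TT in
/-- **Flatness part of Theorem 5.1 of the paper.**  If `P, Q : U → M_m(ℂ)` are
continuously real-differentiable and satisfy the zero-curvature equation
`∂_z Q − ∂_{z̄} P + PQ − QP = 0` on `U`, then so do their `k`-th additive
compounds. -/
theorem addCompound_zero_curvature (m k : ℕ) (hm : 1 ≤ m) (hk1 : 1 ≤ k)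
    (hk2 : k ≤ m) (U : Set ℂ) (hU : IsOpen U)
    (P Q : ℂ → Matrix (Fin m) (Fin m) ℂ)
    (hP : ∀ i j : Fin m, ContDiffOn ℝ 1 (fun z => P z i j) U)
    (hQ : ∀ i j : Fin m, ContDiffOn ℝ 1 (fun z => Q z i j) U)
    (hzc : ∀ z ∈ U, ∀ i j : Fin m,
        wirtingerDz (fun w => Q w i j) z - wirtingerDzbar (fun w => P w i j) z
          + (P z * Q z - Q z * P z) i j = 0) :
    ∀ z ∈ U, ∀ S T : {S : Finset (Fin m) // S.card = k},
      wirtingerDz (fun w => addCompound k (Q w) S T) z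
        - wirtingerDzbar (fun w => addCompound k (P w) S T) z
        + (addCompound k (P z) * addCompound k (Q z)
            - addCompound k (Q z) * addCompound k (P z)) S T = 0 := by
  intro z hz S T
  have hPd : ∀ i j, DifferentiableAt ℝ (fun w => P w i j) z := fun i j =>
    ((hP i j).differentiableOn one_ne_zero).differentiableAt (hU.mem_nhds hz)
  have hQd : ∀ i j, DifferentiableAt ℝ (fun w => Q w i j) z := fun i j =>
    ((hQ i j).differentiableOn one_ne_zero).differentiableAt (hU.mem_nhds hz)
  simp only [addCompound_eq]
  rw [wDz_gadc Q z hQd, wDzbar_gadc P z hPd]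
  have hmat : (Matrix.of fun i j => wirtingerDz (fun w => Q w i j) z)
      - (Matrix.of fun i j => wirtingerDzbar (fun w => P w i j) z)
      = Q z * P z - P z * Q z := by
    ext i j
    have h := hzc z hz i j
    simp only [Matrix.sub_apply, Matrix.of_apply] at h ⊢
    linear_combination h
  have h1 : gadc (Matrix.of fun i j => wirtingerDz (fun w => Q w i j) z) S T
      - gadc (Matrix.of fun i j => wirtingerDzbar (fun w => P w i j) z) S T
      = (gadc (Q z * P z) - gadc (P z * Q z) : Matrix (Idx m k) (Idx m k) ℂ) S T := by
    rw [← Matrix.sub_apply, ← gadc_sub, hmat, gadc_sub]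
  rw [h1, ← gadc_bracket]
  simp only [Matrix.sub_apply]
  ring
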